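/- For every s ∈ Γ, the quantity ‖λ(s)ξ_y − ξ_{s·y}‖₂ tends to 0 as y → ∞ along the cofinite filter on Δ_Γ (restricted to y ≠ e), where s·y denotes the Bernoulli shift of y by s. -/

import Mathlib

open Function

/-- The group `Δ_Γ = ⊕_Γ Δ` of finitely supported functions `Γ → Δ`
under pointwise multiplication, as a subgroup of `Γ → Δ`. -/
def DeltaGamma (Γ Δ : Type*) [Group Δ] : Subgroup (Γ → Δ) where
  carrier := {y | (mulSupport y).Finite}
  one_mem' := by simp [mulSupport_one]
  mul_mem' := by
    intro a b ha hb
    exact ((Set.Finite.union ha hb).subset (mulSupport_mul a b))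
  inv_mem' := by
    intro a ha
    simpa [mulSupport_inv] using ha

/-- The Bernoulli shift of `Γ` on `Δ_Γ`: `(s·y)(t) = y(s⁻¹t)`. -/
def bshift {Γ Δ : Type*} [Group Γ] [Group Δ] (s : Γ) (y : DeltaGamma Γ Δ) :
    DeltaGamma Γ Δ :=
  ⟨fun t => (y : Γ → Δ) (s⁻¹ * t), by
    have hy : (mulSupport (y : Γ → Δ)).Finite := y.2
    refine Set.Finite.subset (hy.image (fun t => s * t)) ?_
    intro t ht
    exact ⟨s⁻¹ * t, ht, by group⟩⟩

/-- A proper length function on a group. -/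
structure IsProperLength {G : Type*} [Group G] (l : G → ℝ) : Prop where
  nonneg : ∀ s, 0 ≤ l s
  eq_zero_iff : ∀ s, l s = 0 ↔ s = 1
  mul_le : ∀ s t, l (s * t) ≤ l s + l t
  inv_eq : ∀ s, l s⁻¹ = l s
  proper : ∀ R : ℝ, {s : G | l s ≤ R}.Finite

open Classical in
/-- `w(y,t) = l_Γ(t) + l_Δ(y t)` if `t ∈ supp y`, and `0` otherwise. -/
noncomputable def wt {Γ Δ : Type*} [Group Δ] (lG : Γ → ℝ) (lD : Δ → ℝ)
    (y : Γ → Δ) (t : Γ) : ℝ :=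
  if y t ≠ 1 then lG t + lD (y t) else 0

/-- `w(y) = Σ_t w(y,t)`. -/
noncomputable def w {Γ Δ : Type*} [Group Δ] (lG : Γ → ℝ) (lD : Δ → ℝ)
    (y : Γ → Δ) : ℝ :=
  ∑ᶠ t, wt lG lD y t

/-- The coefficients of the unit vector `ξ_y ∈ ℓ²(Γ)`: `ξ_y(t) = (w(y,t)/w(y))^{1/2}`. -/
noncomputable def xi {Γ Δ : Type*} [Group Δ] (lG : Γ → ℝ) (lD : Δ → ℝ)
    (y : Γ → Δ) (t : Γ) : ℝ :=
  Real.sqrt (wt lG lD y t / w lG lD y)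

set_option linter.unusedSectionVars false

section Aux
variable {Γ Δ : Type*} [Group Γ] [Group Δ] (lG : Γ → ℝ) (lD : Δ → ℝ)

lemma sq_sqrt_sub_sqrt_le {x y : ℝ} (hx : 0 ≤ x) (hy : 0 ≤ y) :
    (Real.sqrt x - Real.sqrt y) ^ 2 ≤ |x - y| := by
  wlog h : y ≤ x generalizing x y
  · rw [abs_sub_comm]
    have := this hy hx (le_of_not_ge h)
    nlinarith [this]
  rw [abs_of_nonneg (by linarith)]
  nlinarith [Real.sq_sqrt hx, Real.sq_sqrt hy, Real.sqrt_nonneg x, Real.sqrt_nonneg y,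
    Real.sqrt_le_sqrt h]

lemma wt_nonneg (hG : IsProperLength lG) (hD : IsProperLength lD) (y : Γ → Δ) (t : Γ) :
    0 ≤ wt lG lD y t := by
  unfold wt
  split_ifs
  · exact add_nonneg (hG.nonneg t) (hD.nonneg _)
  · exact le_refl 0

lemma wt_support_subset (y : Γ → Δ) : support (wt lG lD y) ⊆ mulSupport y := by
  intro t ht
  simp only [mem_support, wt, ne_eq, ite_not] at ht
  by_contra h
  simp only [mem_mulSupport, not_not] at h
  simp [h] at ht

lemma w_eq_sum (y : Γ → Δ) (hy : (mulSupport y).Finite) :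
    w lG lD y = ∑ t ∈ hy.toFinset, wt lG lD y t := by
  apply finsum_eq_finset_sum_of_support_subset
  rw [Set.Finite.coe_toFinset]
  exact wt_support_subset lG lD y

lemma wt_pos (hG : IsProperLength lG) (hD : IsProperLength lD) {y : Γ → Δ} {t : Γ}
    (ht : y t ≠ 1) : 0 < wt lG lD y t := by
  unfold wt
  rw [if_pos ht]
  have h1 : 0 < lD (y t) :=
    lt_of_le_of_ne (hD.nonneg _) (fun h => ht ((hD.eq_zero_iff _).mp h.symm))
  have := hG.nonneg t
  linarith

lemma wt_le_w (hG : IsProperLength lG) (hD : IsProperLength lD) {y : Γ → Δ}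
    (hy : (mulSupport y).Finite) (t : Γ) : wt lG lD y t ≤ w lG lD y := by
  classical
  rw [w_eq_sum lG lD y hy]
  by_cases ht : y t ≠ 1
  · exact Finset.single_le_sum (fun i _ => wt_nonneg lG lD hG hD y i)
      (by rw [Set.Finite.mem_toFinset]; exact ht)
  · have : wt lG lD y t = 0 := by simp [wt, ht]
    rw [this]
    exact Finset.sum_nonneg (fun i _ => wt_nonneg lG lD hG hD y i)

lemma w_pos (hG : IsProperLength lG) (hD : IsProperLength lD) {y : Γ → Δ}
    (hy : (mulSupport y).Finite) (hne : y ≠ 1) : 0 < w lG lD y := by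
  obtain ⟨t, ht⟩ := Function.ne_iff.mp hne
  exact lt_of_lt_of_le (wt_pos lG lD hG hD ht) (wt_le_w lG lD hG hD hy t)

end Aux

section Aux2
variable {Γ Δ : Type*} [Group Γ] [Group Δ] (lG : Γ → ℝ) (lD : Δ → ℝ)

lemma finite_w_le (hG : IsProperLength lG) (hD : IsProperLength lD) (K : ℝ) :
    {y : DeltaGamma Γ Δ | w lG lD (y : Γ → Δ) ≤ K}.Finite := by
  classical
  set S : Set Γ := {t | lG t ≤ K} with hS
  have hSfin : S.Finite := hG.proper K
  set D : Set Δ := {d | lD d ≤ K} ∪ {1} with hD'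
  have hDfin : D.Finite := (hD.proper K).union (Set.finite_singleton 1)
  set M : Set (Γ → Δ) := {g | (mulSupport g).Finite ∧ mulSupport g ⊆ S ∧ ∀ t, g t ∈ D} with hM
  have hMfin : M.Finite := by
    haveI : Finite S := hSfin.to_subtype
    have himg : ((fun (g : Γ → Δ) (t : S) => g t) '' M).Finite := by
      apply Set.Finite.subset (Set.Finite.pi (fun _ : S => hDfin))
      rintro _ ⟨g, hg, rfl⟩
      intro t _
      exact hg.2.2 t
    apply Set.Finite.of_finite_image himg
    intro g1 hg1 g2 hg2 heq
    funext t
    by_cases ht : t ∈ S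
    · exact congrFun heq ⟨t, ht⟩
    · have h1 : g1 t = 1 := by
        by_contra h; exact ht (hg1.2.1 h)
      have h2 : g2 t = 1 := by
        by_contra h; exact ht (hg2.2.1 h)
      rw [h1, h2]
  have hsub : {y : DeltaGamma Γ Δ | w lG lD (y : Γ → Δ) ≤ K} ⊆ Subtype.val ⁻¹' M := by
    intro y hy
    have hfin : (mulSupport (y : Γ → Δ)).Finite := y.2
    refine ⟨hfin, ?_, ?_⟩
    · intro t ht
      have h1 : wt lG lD (y : Γ → Δ) t ≤ K := le_trans (wt_le_w lG lD hG hD hfin t) hy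
      have h2 : (y : Γ → Δ) t ≠ 1 := ht
      rw [hS]
      simp only [Set.mem_setOf_eq]
      have heq : wt lG lD (y : Γ → Δ) t = lG t + lD ((y : Γ → Δ) t) := by simp [wt, h2]
      have hnn := hD.nonneg ((y : Γ → Δ) t)
      linarith [heq ▸ h1]
    · intro t
      by_cases h2 : (y : Γ → Δ) t = 1
      · right; simp [h2]
      · left
        have h1 : wt lG lD (y : Γ → Δ) t ≤ K := le_trans (wt_le_w lG lD hG hD hfin t) hy
        have heq : wt lG lD (y : Γ → Δ) t = lG t + lD ((y : Γ → Δ) t) := by simp [wt, h2]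
        have := hG.nonneg t
        simp only [Set.mem_setOf_eq]
        linarith [heq ▸ h1]
  exact Set.Finite.subset (hMfin.preimage (Subtype.val_injective.injOn)) hsub

end Aux2

section Aux3
variable {Γ Δ : Type*} [Group Γ] [Group Δ] (lG : Γ → ℝ) (lD : Δ → ℝ)

lemma term_bound {a b A B : ℝ} (ha : 0 ≤ a) (hb : 0 ≤ b) (hA : 0 < A) (hB : 0 < B) :
    (Real.sqrt (a / A) - Real.sqrt (b / B)) ^ 2 ≤ |a - b| / A + b * |1 / A - 1 / B| := by
  have h1 : (Real.sqrt (a / A) - Real.sqrt (b / B)) ^ 2 ≤ |a / A - b / B| :=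
    sq_sqrt_sub_sqrt_le (div_nonneg ha hA.le) (div_nonneg hb hB.le)
  have h2 : a / A - b / B = (a - b) / A + b * (1 / A - 1 / B) := by
    field_simp
    ring
  calc (Real.sqrt (a / A) - Real.sqrt (b / B)) ^ 2 ≤ |a / A - b / B| := h1
    _ = |(a - b) / A + b * (1 / A - 1 / B)| := by rw [h2]
    _ ≤ |(a - b) / A| + |b * (1 / A - 1 / B)| := abs_add_le _ _
    _ = |a - b| / A + b * |1 / A - 1 / B| := by
        rw [abs_div, abs_of_pos hA, abs_mul, abs_of_nonneg hb]

lemma key_bound (hG : IsProperLength lG) (hD : IsProperLength lD) (s : Γ)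
    (y : DeltaGamma Γ Δ) (hne : y ≠ 1) (hfin : (mulSupport (y : Γ → Δ)).Finite) :
    (∑' t : Γ, (xi lG lD (y : Γ → Δ) (s⁻¹ * t) - xi lG lD (bshift s y : Γ → Δ) t) ^ 2)
      ≤ 2 * lG s * hfin.toFinset.card / w lG lD (y : Γ → Δ) := by
  classical
  have hL0 : 0 ≤ lG s := hG.nonneg s
  have hYne : (y : Γ → Δ) ≠ 1 := by
    intro h
    exact hne (Subtype.ext h)
  have hApos : 0 < w lG lD (y : Γ → Δ) := w_pos lG lD hG hD hfin hYne
  have hbsh : ∀ t, (bshift s y : Γ → Δ) t = (y : Γ → Δ) (s⁻¹ * t) := fun t => rfl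
  set F := hfin.toFinset with hF
  set T := F.image (fun u => s * u) with hT
  have hinj : Function.Injective (fun u : Γ => s * u) := fun a b hab => mul_left_cancel hab
  have hmemT : ∀ t : Γ, t ∈ T ↔ (y : Γ → Δ) (s⁻¹ * t) ≠ 1 := by
    intro t
    simp only [hT, Finset.mem_image, hF, Set.Finite.mem_toFinset, mem_mulSupport]
    constructor
    · rintro ⟨u, hu, rfl⟩
      simpa using hu
    · intro h
      exact ⟨s⁻¹ * t, h, by group⟩
  have hbfin : (mulSupport ((bshift s y : Γ → Δ))).Finite := (bshift s y).2
  have hbsupp : support (wt lG lD (bshift s y : Γ → Δ)) ⊆ (T : Set Γ) := by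
    intro t ht
    have h2 := wt_support_subset lG lD (bshift s y : Γ → Δ) ht
    rw [mem_mulSupport, hbsh] at h2
    exact (hmemT t).mpr h2
  have hBsum : w lG lD (bshift s y : Γ → Δ) = ∑ t ∈ T, wt lG lD (bshift s y : Γ → Δ) t :=
    finsum_eq_finset_sum_of_support_subset _ hbsupp
  have hAsum : w lG lD (y : Γ → Δ) = ∑ t ∈ T, wt lG lD (y : Γ → Δ) (s⁻¹ * t) := by
    rw [w_eq_sum lG lD (y : Γ → Δ) hfin, hT, Finset.sum_image (fun a _ b _ hab => hinj hab)]
    apply Finset.sum_congr rfl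
    intro u _
    congr 1
    group
  have hBpos : 0 < w lG lD (bshift s y : Γ → Δ) := by
    obtain ⟨t, ht⟩ := Function.ne_iff.mp hYne
    have hb1 : (bshift s y : Γ → Δ) (s * t) ≠ 1 := by
      rw [hbsh]
      simpa using ht
    exact w_pos lG lD hG hD hbfin (Function.ne_iff.mpr ⟨s * t, hb1⟩)
  have hdiff : ∀ t ∈ T,
      |wt lG lD (y : Γ → Δ) (s⁻¹ * t) - wt lG lD (bshift s y : Γ → Δ) t| ≤ lG s := by
    intro t ht
    have hc : (y : Γ → Δ) (s⁻¹ * t) ≠ 1 := (hmemT t).mp ht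
    have e1 : wt lG lD (y : Γ → Δ) (s⁻¹ * t) = lG (s⁻¹ * t) + lD ((y : Γ → Δ) (s⁻¹ * t)) := by
      simp [wt, hc]
    have e2 : wt lG lD (bshift s y : Γ → Δ) t = lG t + lD ((y : Γ → Δ) (s⁻¹ * t)) := by
      simp [wt, hbsh, hc]
    rw [e1, e2]
    have h1 : lG (s⁻¹ * t) ≤ lG s⁻¹ + lG t := hG.mul_le s⁻¹ t
    have h2 : lG t ≤ lG s + lG (s⁻¹ * t) := by
      have h3 := hG.mul_le s (s⁻¹ * t)
      simpa [mul_inv_cancel_left] using h3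
    rw [hG.inv_eq] at h1
    rw [abs_le]
    constructor <;> linarith
  have hTcard : T.card = F.card := Finset.card_image_of_injective _ hinj
  have hsumdiff : ∑ t ∈ T, |wt lG lD (y : Γ → Δ) (s⁻¹ * t) - wt lG lD (bshift s y : Γ → Δ) t|
      ≤ lG s * F.card := by
    calc ∑ t ∈ T, |wt lG lD (y : Γ → Δ) (s⁻¹ * t) - wt lG lD (bshift s y : Γ → Δ) t|
        ≤ ∑ _t ∈ T, lG s := Finset.sum_le_sum hdiff
      _ = T.card * lG s := by rw [Finset.sum_const, nsmul_eq_mul]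
      _ = lG s * F.card := by rw [hTcard]; ring
  have hABdiff : |w lG lD (y : Γ → Δ) - w lG lD (bshift s y : Γ → Δ)| ≤ lG s * F.card := by
    rw [hAsum, hBsum, ← Finset.sum_sub_distrib]
    exact le_trans (Finset.abs_sum_le_sum_abs _ _) hsumdiff
  have htsum : (∑' t : Γ, (xi lG lD (y : Γ → Δ) (s⁻¹ * t) - xi lG lD (bshift s y : Γ → Δ) t) ^ 2)
      = ∑ t ∈ T, (xi lG lD (y : Γ → Δ) (s⁻¹ * t) - xi lG lD (bshift s y : Γ → Δ) t) ^ 2 := by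
    apply tsum_eq_sum
    intro t ht
    have hc : (y : Γ → Δ) (s⁻¹ * t) = 1 := by
      by_contra h
      exact ht ((hmemT t).mpr h)
    have e1 : wt lG lD (y : Γ → Δ) (s⁻¹ * t) = 0 := by simp [wt, hc]
    have e2 : wt lG lD (bshift s y : Γ → Δ) t = 0 := by simp [wt, hbsh t, hc]
    simp [xi, e1, e2]
  rw [htsum]
  have hBterm : w lG lD (bshift s y : Γ → Δ) *
      |1 / w lG lD (y : Γ → Δ) - 1 / w lG lD (bshift s y : Γ → Δ)|
      = |w lG lD (bshift s y : Γ → Δ) - w lG lD (y : Γ → Δ)| / w lG lD (y : Γ → Δ) := by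
    have h4 : 1 / w lG lD (y : Γ → Δ) - 1 / w lG lD (bshift s y : Γ → Δ)
        = (w lG lD (bshift s y : Γ → Δ) - w lG lD (y : Γ → Δ))
          / (w lG lD (y : Γ → Δ) * w lG lD (bshift s y : Γ → Δ)) := by
      field_simp
    rw [h4, abs_div, abs_of_pos (mul_pos hApos hBpos)]
    field_simp
  calc ∑ t ∈ T, (xi lG lD (y : Γ → Δ) (s⁻¹ * t) - xi lG lD (bshift s y : Γ → Δ) t) ^ 2
      ≤ ∑ t ∈ T, (|wt lG lD (y : Γ → Δ) (s⁻¹ * t) - wt lG lD (bshift s y : Γ → Δ) t|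
          / w lG lD (y : Γ → Δ)
          + wt lG lD (bshift s y : Γ → Δ) t *
            |1 / w lG lD (y : Γ → Δ) - 1 / w lG lD (bshift s y : Γ → Δ)|) := by
        apply Finset.sum_le_sum
        intro t _
        exact term_bound (wt_nonneg lG lD hG hD _ _) (wt_nonneg lG lD hG hD _ _) hApos hBpos
    _ = (∑ t ∈ T, |wt lG lD (y : Γ → Δ) (s⁻¹ * t) - wt lG lD (bshift s y : Γ → Δ) t|)
          / w lG lD (y : Γ → Δ)
        + w lG lD (bshift s y : Γ → Δ) *
            |1 / w lG lD (y : Γ → Δ) - 1 / w lG lD (bshift s y : Γ → Δ)| := by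
        rw [Finset.sum_add_distrib, ← Finset.sum_div, ← Finset.sum_mul, ← hBsum]
    _ ≤ lG s * F.card / w lG lD (y : Γ → Δ)
        + |w lG lD (bshift s y : Γ → Δ) - w lG lD (y : Γ → Δ)| / w lG lD (y : Γ → Δ) := by
        rw [hBterm]
        gcongr
    _ ≤ lG s * F.card / w lG lD (y : Γ → Δ) + lG s * F.card / w lG lD (y : Γ → Δ) := by
        gcongr
        rw [abs_sub_comm]
        exact hABdiff
    _ = 2 * lG s * F.card / w lG lD (y : Γ → Δ) := by ring

end Aux3

section Aux4
variable {Γ Δ : Type*} [Group Γ] [Group Δ] (lG : Γ → ℝ) (lD : Δ → ℝ)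

lemma w_ge (hG : IsProperLength lG) (hD : IsProperLength lD) (R : ℝ) (hR : 0 ≤ R)
    (y : Γ → Δ) (hfin : (mulSupport y).Finite) :
    ((hfin.toFinset.card : ℝ) - ((hG.proper R).toFinset.card : ℝ)) * R ≤ w lG lD y := by
  classical
  set F := hfin.toFinset with hF
  set m := (hG.proper R).toFinset.card with hm
  set F' := F.filter (fun t => ¬ lG t ≤ R) with hF'
  have h1 : (F.filter (fun t => lG t ≤ R)).card ≤ m := by
    apply Finset.card_le_card
    intro t ht
    rw [Set.Finite.mem_toFinset]
    exact (Finset.mem_filter.mp ht).2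
  have h2 : F.card ≤ m + F'.card := by
    have h3 := Finset.card_filter_add_card_filter_not (s := F) (p := fun t => lG t ≤ R)
    rw [← hF'] at h3
    omega
  have h3 : ∀ t ∈ F', R ≤ wt lG lD y t := by
    intro t ht
    obtain ⟨htF, htR⟩ := Finset.mem_filter.mp ht
    have hne : y t ≠ 1 := by
      rw [hF, Set.Finite.mem_toFinset, mem_mulSupport] at htF
      exact htF
    have heq : wt lG lD y t = lG t + lD (y t) := by simp [wt, hne]
    have := hD.nonneg (y t)
    rw [heq]
    push_neg at htR
    linarith
  have h4 : (F'.card : ℝ) * R ≤ ∑ t ∈ F', wt lG lD y t := by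
    calc (F'.card : ℝ) * R = ∑ _t ∈ F', R := by rw [Finset.sum_const, nsmul_eq_mul]
      _ ≤ ∑ t ∈ F', wt lG lD y t := Finset.sum_le_sum h3
  have h5 : ∑ t ∈ F', wt lG lD y t ≤ ∑ t ∈ F, wt lG lD y t :=
    Finset.sum_le_sum_of_subset_of_nonneg (Finset.filter_subset _ _)
      (fun t _ _ => wt_nonneg lG lD hG hD y t)
  rw [w_eq_sum lG lD y hfin]
  have h6 : ((F.card : ℝ) - m) * R ≤ (F'.card : ℝ) * R := by
    apply mul_le_mul_of_nonneg_right _ hR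
    have : (F.card : ℝ) ≤ m + F'.card := by exact_mod_cast h2
    linarith
  calc ((F.card : ℝ) - m) * R ≤ (F'.card : ℝ) * R := h6
    _ ≤ ∑ t ∈ F', wt lG lD y t := h4
    _ ≤ ∑ t ∈ F, wt lG lD y t := h5

end Aux4

open Filter in
/-- For every `s ∈ Γ`, `‖λ(s)ξ_y − ξ_{s·y}‖₂ → 0` as `y → ∞` along the
cofinite filter on `Δ_Γ` (restricted to `y ≠ e`), where `s·y` is the Bernoulli shift
and `(λ(s)ξ)(t) = ξ(s⁻¹t)`. -/
theorem stmt14 {Γ Δ : Type*} [Group Γ] [Group Δ] [Countable Γ] [Countable Δ]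
    (lG : Γ → ℝ) (lD : Δ → ℝ) (hG : IsProperLength lG) (hD : IsProperLength lD)
    (s : Γ) :
    Tendsto
      (fun y : DeltaGamma Γ Δ =>
        Real.sqrt (∑' t : Γ,
          (xi lG lD (y : Γ → Δ) (s⁻¹ * t) - xi lG lD (bshift s y : Γ → Δ) t) ^ 2))
      (cofinite ⊓ Filter.principal {y : DeltaGamma Γ Δ | y ≠ 1})
      (nhds 0) := by
  classical
  rw [Metric.tendsto_nhds]
  intro ε hε
  rw [Filter.eventually_inf_principal, Filter.eventually_cofinite]
  have hL0 : 0 ≤ lG s := hG.nonneg s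
  set η := ε ^ 2 with hηdef
  have hη : 0 < η := by positivity
  set R := 8 * lG s / η + 1 with hRdef
  have hR0 : 0 < R := by positivity
  set m := ((hG.proper R).toFinset.card : ℝ) with hmdef
  have hm0 : 0 ≤ m := Nat.cast_nonneg _
  set K := 4 * lG s * m / η with hKdef
  apply Set.Finite.subset (finite_w_le lG lD hG hD K)
  intro y hy
  simp only [Set.mem_setOf_eq] at hy
  push_neg at hy
  obtain ⟨hne, hge⟩ := hy
  have hfin : (mulSupport (y : Γ → Δ)).Finite := y.2
  have hYne : (y : Γ → Δ) ≠ 1 := fun h => hne (Subtype.ext h)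
  have hApos : 0 < w lG lD (y : Γ → Δ) := w_pos lG lD hG hD hfin hYne
  have hkey := key_bound lG lD hG hD s y hne hfin
  rw [Real.dist_eq, sub_zero, abs_of_nonneg (Real.sqrt_nonneg _)] at hge
  have htle : η ≤ ∑' t : Γ,
      (xi lG lD (y : Γ → Δ) (s⁻¹ * t) - xi lG lD (bshift s y : Γ → Δ) t) ^ 2 := by
    by_contra h
    push_neg at h
    have := (Real.sqrt_lt' hε).mpr h
    linarith
  set n := ((hfin.toFinset.card : ℝ)) with hndef
  have hmain : η ≤ 2 * lG s * n / w lG lD (y : Γ → Δ) := le_trans htle hkey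
  have hlow : (n - m) * R ≤ w lG lD (y : Γ → Δ) := w_ge lG lD hG hD R hR0.le _ hfin
  have hn1 : (1 : ℝ) ≤ n := by
    rw [hndef]
    have : 0 < hfin.toFinset.card := by
      obtain ⟨t, ht⟩ := Function.ne_iff.mp hYne
      exact Finset.card_pos.mpr ⟨t, by rwa [Set.Finite.mem_toFinset, mem_mulSupport]⟩
    exact_mod_cast this
  have h5 : η * w lG lD (y : Γ → Δ) ≤ 2 * lG s * n := by
    rw [le_div_iff₀ hApos] at hmain
    linarith
  show w lG lD (y : Γ → Δ) ≤ K
  by_cases hc : n < 2 * m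
  · have h3 : η * w lG lD (y : Γ → Δ) ≤ 4 * lG s * m := by nlinarith
    rw [hKdef, le_div_iff₀ hη]
    linarith
  · exfalso
    push_neg at hc
    have h4 : n / 2 * R ≤ w lG lD (y : Γ → Δ) :=
      le_trans (mul_le_mul_of_nonneg_right (by linarith) hR0.le) hlow
    have h6 : η * (n / 2 * R) ≤ 2 * lG s * n :=
      le_trans (mul_le_mul_of_nonneg_left h4 hη.le) h5
    have h7 : η * R ≤ 4 * lG s := by nlinarith
    have h8 : η * R = 8 * lG s + η := by
      rw [hRdef]
      field_simp
    linarith
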